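/- There exist a set X and multirelations R, S over X such that R · (S ∪ T) is not contained in R · S ∪ R · T for suitable T; concretely, with X = {a,b}, R = {(a,{a,b})}, S = {(a,{a})}, T = {(b,{b})}, one has R · (S ∪ T) = R while R · S ∪ R · T = ∅. -/
import Mathlib


open Set

/-- Sequential composition of multirelations (Peleg). -/
def mseq {X : Type*} (R S : Set (X × Set X)) : Set (X × Set X) :=
  {p | ∃ B, (p.1, B) ∈ R ∧ ∃ f : X → Set X, (∀ b ∈ B, (b, f b) ∈ S) ∧ p.2 = ⋃ b ∈ B, f b}

/-- The unit of sequential composition. -/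
def sunit (X : Type*) : Set (X × Set X) := {p | p.2 = {p.1}}

/-- Parallel (concurrent) composition of multirelations. -/
def mpar {X : Type*} (R S : Set (X × Set X)) : Set (X × Set X) :=
  {p | ∃ A B, (p.1, A) ∈ R ∧ (p.1, B) ∈ S ∧ p.2 = A ∪ B}

/-- The unit of parallel composition. -/
def punit (X : Type*) : Set (X × Set X) := {p | p.2 = (∅ : Set X)}

/-- Domain of a multirelation. -/
def mdom {X : Type*} (R : Set (X × Set X)) : Set (X × Set X) :=
  {p | p.2 = {p.1} ∧ ∃ A, (p.1, A) ∈ R}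

/-- Antidomain of a multirelation. -/
def mantidom {X : Type*} (R : Set (X × Set X)) : Set (X × Set X) :=
  {p | p.2 = {p.1} ∧ ¬ ∃ A, (p.1, A) ∈ R}

/-- Diamond operator. -/
def mdia {X : Type*} (R P : Set (X × Set X)) : Set (X × Set X) := mdom (mseq R P)

theorem stmt3 {X : Type*} (a b : X) (hab : a ≠ b) :
    mseq ({(a, ({a, b} : Set X))} : Set (X × Set X))
         (({(a, ({a} : Set X))} : Set (X × Set X)) ∪ {(b, ({b} : Set X))})
      = ({(a, ({a, b} : Set X))} : Set (X × Set X)) ∧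
    mseq ({(a, ({a, b} : Set X))} : Set (X × Set X)) {(a, ({a} : Set X))} ∪
    mseq ({(a, ({a, b} : Set X))} : Set (X × Set X)) {(b, ({b} : Set X))} = ∅ := by
  constructor
  · ext ⟨x, A⟩
    simp only [mseq, Set.mem_setOf_eq, Set.mem_singleton_iff, Set.mem_union,
      Prod.mk.injEq, Prod.ext_iff]
    constructor
    · rintro ⟨B, ⟨hx, hB⟩, f, hf, hA⟩
      subst x; subst hB
      have ha := hf a (by simp)
      have hb := hf b (by simp)
      have hfa : f a = {a} := by
        rcases ha with ⟨h1, h2⟩ | ⟨h1, h2⟩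
        · exact h2
        · exact absurd h1 hab
      have hfb : f b = {b} := by
        rcases hb with ⟨h1, h2⟩ | ⟨h1, h2⟩
        · exact absurd h1.symm hab
        · exact h2
      refine ⟨rfl, ?_⟩
      rw [hA]
      ext y; simp [hfa, hfb, Set.mem_insert_iff, or_comm]
    · rintro ⟨hx, hA⟩
      subst x; subst hA
      refine ⟨{a, b}, ⟨rfl, rfl⟩, fun x => {x}, ?_, ?_⟩
      · rintro c hc
        rcases hc with rfl | rfl
        · left; exact ⟨rfl, rfl⟩
        · right; exact ⟨rfl, rfl⟩
      · ext y; simp [or_comm]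
  · ext ⟨x, A⟩
    simp only [mseq, Set.mem_union, Set.mem_setOf_eq, Set.mem_singleton_iff,
      Prod.ext_iff, Set.mem_empty_iff_false, iff_false]
    rintro (⟨B, ⟨hx, hB⟩, f, hf, hA⟩ | ⟨B, ⟨hx, hB⟩, f, hf, hA⟩)
    · subst hB
      have := hf b (by simp)
      exact hab this.1.symm
    · subst hB
      have := hf a (by simp)
      exact hab this.1
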